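/- Let n ≥ 3 be an integer and let g : (1,∞) → ℝ be locally absolutely continuous with g(r)² rⁿ → 0 as r → ∞. Then (1/2) ∫₁^∞ g(r)² r^{n−1} √(r^{n−2}/(r^{n−2}−1)) dr ≤ (∫₁^∞ s(r)² g(r)² r^{n−1} √(r^{n−2}/(r^{n−2}−1)) dr)^{1/2} · (∫₁^∞ g'(r)² r^{n−1} √((r^{n−2}−1)/r^{n−2}) dr)^{1/2}. -/

import Mathlib

open MeasureTheory Filter Set intervalIntegral
open scoped ENNReal NNReal

/-- The induced distance from the event horizon:
`s(r) = r^(−(n−1)) ∫₁^r √(ξ^(n−2)/(ξ^(n−2)−1)) ξ^(n−1) dξ`. -/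
noncomputable def schS (n : ℕ) (r : ℝ) : ℝ :=
  (∫ ξ in (1 : ℝ)..r, Real.sqrt (ξ ^ (n - 2) / (ξ ^ (n - 2) - 1)) * ξ ^ (n - 1)) / r ^ (n - 1)


noncomputable def hfun (n : ℕ) (ξ : ℝ) : ℝ :=
  Real.sqrt (ξ ^ (n - 2) / (ξ ^ (n - 2) - 1)) * ξ ^ (n - 1)

noncomputable def Sfun (n : ℕ) (r : ℝ) : ℝ := ∫ ξ in (1:ℝ)..r, hfun n ξ

lemma hfun_meas (n : ℕ) : Measurable (hfun n) := by
  unfold hfun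
  exact ((measurable_id.pow_const _).div ((measurable_id.pow_const _).sub measurable_const)).sqrt.mul
    (measurable_id.pow_const _)

lemma hfun_nonneg (n : ℕ) {ξ : ℝ} (hξ : 0 ≤ ξ) : 0 ≤ hfun n ξ :=
  mul_nonneg (Real.sqrt_nonneg _) (pow_nonneg hξ _)

lemma hfun_II (n : ℕ) (hn : 3 ≤ n) {b : ℝ} (hb : 1 ≤ b) :
    IntervalIntegrable (hfun n) volume 1 b := by
  have hm : n - 2 ≠ 0 := by omega
  rw [intervalIntegrable_iff_integrableOn_Ioc_of_le hb]
  have hdom : IntegrableOn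
      (fun ξ : ℝ => (Real.sqrt (b ^ (n-2)) * b ^ (n-1)) * (ξ - 1) ^ (-(1/2) : ℝ))
      (Ioc 1 b) := by
    have h0 : IntervalIntegrable (fun x : ℝ => x ^ (-(1/2) : ℝ)) volume 0 (b - 1) :=
      intervalIntegrable_rpow' (by norm_num)
    have h1 := (h0.comp_sub_right 1).const_mul (Real.sqrt (b ^ (n-2)) * b ^ (n-1))
    rw [zero_add, sub_add_cancel] at h1
    exact (intervalIntegrable_iff_integrableOn_Ioc_of_le hb).mp h1
  refine Integrable.mono' hdom ((hfun_meas n).aestronglyMeasurable) ?_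
  filter_upwards [ae_restrict_mem measurableSet_Ioc] with ξ hξ
  obtain ⟨h1ξ, hξb⟩ := hξ
  have hξ0 : (0:ℝ) < ξ := by linarith
  have hξm : 1 < ξ ^ (n - 2) := one_lt_pow₀ h1ξ hm
  have hle : ξ - 1 ≤ ξ ^ (n - 2) - 1 := by
    have : ξ ≤ ξ ^ (n - 2) := le_self_pow₀ (by linarith) hm
    linarith
  have hnn : 0 ≤ hfun n ξ := hfun_nonneg n hξ0.le
  rw [Real.norm_of_nonneg hnn]
  have key : hfun n ξ ≤ Real.sqrt (b ^ (n-2) / (ξ - 1)) * b ^ (n-1) := by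
    unfold hfun
    refine mul_le_mul ?_ (pow_le_pow_left₀ hξ0.le hξb _) (by positivity) (Real.sqrt_nonneg _)
    exact Real.sqrt_le_sqrt
      (div_le_div₀ (by positivity) (pow_le_pow_left₀ hξ0.le hξb _) (by linarith) hle)
  refine key.trans (le_of_eq ?_)
  rw [Real.sqrt_div (by positivity) (ξ - 1), Real.rpow_neg (by linarith),
    ← Real.sqrt_eq_rpow]
  ring

lemma hfun_II' (n : ℕ) (hn : 3 ≤ n) {u v : ℝ} (hu : 1 ≤ u) (huv : u ≤ v) :
    IntervalIntegrable (hfun n) volume u v := by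
  refine (hfun_II n hn (hu.trans huv)).mono_set ?_
  rw [uIcc_of_le huv, uIcc_of_le (hu.trans huv)]
  exact Icc_subset_Icc hu le_rfl

lemma Sfun_nonneg (n : ℕ) {r : ℝ} (hr : 1 ≤ r) : 0 ≤ Sfun n r :=
  intervalIntegral.integral_nonneg hr fun x hx => hfun_nonneg n (by linarith [hx.1])

lemma Sfun_add (n : ℕ) (hn : 3 ≤ n) {u v : ℝ} (hu : 1 ≤ u) (huv : u ≤ v) :
    Sfun n v = Sfun n u + ∫ t in u..v, hfun n t := by
  unfold Sfun
  rw [intervalIntegral.integral_add_adjacent_intervals (hfun_II n hn hu) (hfun_II' n hn hu huv)]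

lemma Sfun_contOn (n : ℕ) (hn : 3 ≤ n) : ContinuousOn (Sfun n) (Ioi 1) := by
  intro r hr
  apply ContinuousAt.continuousWithinAt
  set a : ℝ := (1 + r) / 2
  have ha1 : 1 < a := by simp only [a]; rw [mem_Ioi] at hr; linarith
  have har : a < r := by simp only [a]; rw [mem_Ioi] at hr; linarith
  have hmem : Icc a (r + 1) ∈ nhds r := Icc_mem_nhds har (by linarith)
  have hcont : ContinuousOn (fun x => Sfun n a + ∫ t in a..x, hfun n t) (Icc a (r + 1)) := by
    refine continuousOn_const.add ?_
    have := intervalIntegral.continuousOn_primitive_interval'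
      (hfun_II' n hn ha1.le (by linarith : a ≤ r + 1)) (left_mem_uIcc (a := a) (b := r + 1))
    rwa [uIcc_of_le (by linarith : a ≤ r + 1)] at this
  have heq : (fun x => Sfun n a + ∫ t in a..x, hfun n t) =ᶠ[nhds r] Sfun n := by
    filter_upwards [hmem] with x hx
    exact (Sfun_add n hn ha1.le hx.1).symm
  exact (hcont.continuousAt hmem).congr heq

lemma Sfun_growth (n : ℕ) (hn : 3 ≤ n) {b : ℝ} (hb : 2 ≤ b) :
    Sfun n b ≤ (Sfun n 2 + Real.sqrt 2) * b ^ n := by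
  have hb1 : (1:ℝ) ≤ b := by linarith
  have hbn : (1:ℝ) ≤ b ^ n := one_le_pow₀ hb1
  rw [Sfun_add n hn one_le_two hb]
  have hbound : (∫ t in (2:ℝ)..b, hfun n t) ≤ ∫ t in (2:ℝ)..b, Real.sqrt 2 * b ^ (n-1) := by
    refine intervalIntegral.integral_mono_on hb (hfun_II' n hn one_le_two hb)
      (intervalIntegrable_const) fun x hx => ?_
    have hx2 : (2:ℝ) ≤ x := hx.1
    have hx0 : (0:ℝ) < x := by linarith
    have hxm : (2:ℝ) ≤ x ^ (n-2) := by
      calc (2:ℝ) ≤ x := hx2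
      _ ≤ x ^ (n-2) := le_self_pow₀ (by linarith) (by omega)
    unfold hfun
    refine mul_le_mul ?_ (pow_le_pow_left₀ hx0.le hx.2 _) (by positivity) (Real.sqrt_nonneg _)
    refine Real.sqrt_le_sqrt ?_
    rw [div_le_iff₀ (by linarith : (0:ℝ) < x ^ (n-2) - 1)]
    linarith
  have hval : (∫ t in (2:ℝ)..b, Real.sqrt 2 * b ^ (n-1)) ≤ Real.sqrt 2 * b ^ n := by
    rw [intervalIntegral.integral_const]
    have hpow : b * b ^ (n-1) = b ^ n := by
      rw [← pow_succ']
      congr 1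
      omega
    have h2 : Real.sqrt 2 * b ^ (n-1) ≥ 0 := by positivity
    calc (b - 2) • (Real.sqrt 2 * b ^ (n-1)) = (b - 2) * (Real.sqrt 2 * b ^ (n-1)) := rfl
      _ ≤ b * (Real.sqrt 2 * b ^ (n-1)) := by nlinarith
      _ = Real.sqrt 2 * b ^ n := by rw [← hpow]; ring
  have hS2 : Sfun n 2 ≤ Sfun n 2 * b ^ n :=
    le_mul_of_one_le_right (Sfun_nonneg n one_le_two) hbn
  nlinarith [hbound, hval, hS2]

lemma parts_core (a b : ℝ) (hab : a ≤ b) (φ ψ : ℝ → ℝ)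
    (hφ : IntervalIntegrable φ volume a b) (hψ : IntervalIntegrable ψ volume a b) :
    ∫ x in a..b, (φ x * (∫ t in a..x, ψ t) + (∫ t in a..x, φ t) * ψ x)
      = (∫ t in a..b, φ t) * (∫ t in a..b, ψ t) := by
  set A := Ioc a b with hA
  set μ := volume.restrict A with hμ
  have hφ' : IntegrableOn φ A := hφ.1
  have hψ' : IntegrableOn ψ A := hψ.1
  have hmul : Integrable (fun p : ℝ × ℝ => φ p.1 * ψ p.2) (μ.prod μ) :=
    Integrable.mul_prod hφ' hψ'
  set F : ℝ → ℝ → ℝ := fun x t => if t ≤ x then φ x * ψ t else 0 with hF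
  set G : ℝ → ℝ → ℝ := fun x t => if x < t then φ x * ψ t else 0 with hG
  have hFint : Integrable (Function.uncurry F) (μ.prod μ) := by
    have h1 : Function.uncurry F =
        {p : ℝ × ℝ | p.2 ≤ p.1}.indicator (fun p => φ p.1 * ψ p.2) := by
      funext p
      simp only [Function.uncurry, hF, indicator_apply, mem_setOf_eq]
    rw [h1]
    exact hmul.indicator (measurableSet_le measurable_snd measurable_fst)
  have hGint : Integrable (Function.uncurry G) (μ.prod μ) := by
    have h1 : Function.uncurry G =
        {p : ℝ × ℝ | p.1 < p.2}.indicator (fun p => φ p.1 * ψ p.2) := by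
      funext p
      simp only [Function.uncurry, hG, indicator_apply, mem_setOf_eq]
    rw [h1]
    exact hmul.indicator (measurableSet_lt measurable_fst measurable_snd)
  have hsum : ∀ x t : ℝ, F x t + G x t = φ x * ψ t := by
    intro x t
    simp only [hF, hG]
    rcases le_or_gt t x with h | h
    · rw [if_pos h, if_neg (not_lt.mpr h), add_zero]
    · rw [if_neg (not_le.mpr h), if_pos h, zero_add]
  -- main identity: sum of the two double integrals is the product
  have hadd : (∫ x, (∫ t, F x t ∂μ) ∂μ) + (∫ x, (∫ t, G x t ∂μ) ∂μ)
      = (∫ t, φ t ∂μ) * (∫ t, ψ t ∂μ) := by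
    have hFi : Integrable (fun x => ∫ t, F x t ∂μ) μ := hFint.integral_prod_left
    have hGi : Integrable (fun x => ∫ t, G x t ∂μ) μ := hGint.integral_prod_left
    rw [← integral_add hFi hGi]
    have : ∀ᵐ x ∂μ, (∫ t, F x t ∂μ) + (∫ t, G x t ∂μ) = φ x * ∫ t, ψ t ∂μ := by
      filter_upwards [hFint.prod_right_ae, hGint.prod_right_ae] with x hFx hGx
      have hFx' : Integrable (fun t => F x t) μ := hFx
      have hGx' : Integrable (fun t => G x t) μ := hGx
      rw [← integral_add hFx' hGx']
      simp_rw [hsum, MeasureTheory.integral_const_mul]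
    rw [integral_congr_ae this, MeasureTheory.integral_mul_const]
  have evalF : ∀ x ∈ A, (∫ t, F x t ∂μ) = φ x * ∫ t in a..x, ψ t := by
    intro x hx
    have h1 : (fun t => F x t) = (Iic x).indicator (fun t => φ x * ψ t) := by
      funext t; simp only [hF, indicator_apply, mem_Iic]
    rw [hμ, h1, setIntegral_indicator measurableSet_Iic, Ioc_inter_Iic,
      min_eq_right hx.2, MeasureTheory.integral_const_mul, intervalIntegral.integral_of_le hx.1.le]
  have evalG : ∀ t ∈ A, (∫ x, G x t ∂μ) = (∫ s in a..t, φ s) * ψ t := by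
    intro t ht
    have h1 : (fun x => G x t) = (Iio t).indicator (fun x => φ x * ψ t) := by
      funext x; simp only [hG, indicator_apply, mem_Iio]
    have h2 : A ∩ Iio t = Ioo a t := by
      ext x
      simp only [hA, mem_inter_iff, mem_Ioc, mem_Iio, mem_Ioo]
      exact ⟨fun h => ⟨h.1.1, h.2⟩, fun h => ⟨⟨h.1, h.2.le.trans ht.2⟩, h.2⟩⟩
    rw [hμ, h1, setIntegral_indicator measurableSet_Iio, h2, MeasureTheory.integral_mul_const,
      ← integral_Ioc_eq_integral_Ioo, intervalIntegral.integral_of_le ht.1.le]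
  calc ∫ x in a..b, (φ x * (∫ t in a..x, ψ t) + (∫ t in a..x, φ t) * ψ x)
      = ∫ x, (φ x * (∫ t in a..x, ψ t) + (∫ t in a..x, φ t) * ψ x) ∂μ := by
        rw [intervalIntegral.integral_of_le hab]
    _ = ∫ x, ((∫ t, F x t ∂μ) + (∫ y, G y x ∂μ)) ∂μ := by
        rw [hμ]
        refine setIntegral_congr_fun measurableSet_Ioc fun x hx => ?_
        rw [← hμ, evalF x hx, evalG x hx]
    _ = (∫ x, (∫ t, F x t ∂μ) ∂μ) + (∫ x, (∫ y, G y x ∂μ) ∂μ) :=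
        integral_add hFint.integral_prod_left hGint.integral_prod_right
    _ = (∫ x, (∫ t, F x t ∂μ) ∂μ) + (∫ x, (∫ t, G x t ∂μ) ∂μ) := by
        rw [← integral_integral_swap hGint]
    _ = (∫ t, φ t ∂μ) * (∫ t, ψ t ∂μ) := hadd
    _ = (∫ t in a..b, φ t) * (∫ t in a..b, ψ t) := by
        rw [intervalIntegral.integral_of_le hab, intervalIntegral.integral_of_le hab]

lemma parts_ac (a b : ℝ) (hab : a ≤ b) (u v φ ψ : ℝ → ℝ)
    (hφ : IntervalIntegrable φ volume a b) (hψ : IntervalIntegrable ψ volume a b)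
    (hu : ∀ x ∈ Icc a b, u x = u a + ∫ t in a..x, φ t)
    (hv : ∀ x ∈ Icc a b, v x = v a + ∫ t in a..x, ψ t) :
    ∫ x in a..b, (φ x * v x + u x * ψ x) = u b * v b - u a * v a := by
  have hUc : ContinuousOn (fun x => ∫ t in a..x, φ t) (uIcc a b) :=
    intervalIntegral.continuousOn_primitive_interval' hφ left_mem_uIcc
  have hVc : ContinuousOn (fun x => ∫ t in a..x, ψ t) (uIcc a b) :=
    intervalIntegral.continuousOn_primitive_interval' hψ left_mem_uIcc
  have h1 : ∫ x in a..b, (φ x * v x + u x * ψ x)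
      = ∫ x in a..b, ((φ x * v a + u a * ψ x)
          + (φ x * (∫ t in a..x, ψ t) + (∫ t in a..x, φ t) * ψ x)) := by
    refine intervalIntegral.integral_congr fun x hx => ?_
    rw [uIcc_of_le hab] at hx
    rw [hu x hx, hv x hx]; ring
  rw [h1, intervalIntegral.integral_add (((hφ.mul_const _)).add (hψ.const_mul _))
      ((hφ.mul_continuousOn hVc).add (hψ.continuousOn_mul hUc)),
    intervalIntegral.integral_add (hφ.mul_const _) (hψ.const_mul _),
    parts_core a b hab φ ψ hφ hψ, intervalIntegral.integral_mul_const,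
    intervalIntegral.integral_const_mul, hu b (right_mem_Icc.mpr hab),
    hv b (right_mem_Icc.mpr hab)]
  ring

lemma key_ineq (n : ℕ) (hn : 3 ≤ n) (g : ℝ → ℝ)
    (hAC : ∀ a b : ℝ, 1 < a → a ≤ b →
      MeasureTheory.IntegrableOn (deriv g) (Set.Icc a b) ∧
      ∀ x ∈ Set.Icc a b, g x = g a + ∫ t in a..x, deriv g t)
    {a b : ℝ} (ha : 1 < a) (hab : a ≤ b) :
    (∫ x in a..b, g x ^ 2 * hfun n x)
      ≤ g b ^ 2 * Sfun n b + 2 * ∫ x in a..b, |g x * deriv g x| * Sfun n x := by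
  obtain ⟨hDint, hrep⟩ := hAC a b ha hab
  have hDii : IntervalIntegrable (deriv g) volume a b :=
    (intervalIntegrable_iff_integrableOn_Icc_of_le hab).mpr hDint
  have hgc : ContinuousOn g (Icc a b) := by
    have h1 : ContinuousOn (fun x => g a + ∫ t in a..x, deriv g t) (Icc a b) := by
      refine continuousOn_const.add ?_
      have := intervalIntegral.continuousOn_primitive_interval'
        hDii (left_mem_uIcc (a := a) (b := b))
      rwa [uIcc_of_le hab] at this
    exact h1.congr fun x hx => hrep x hx
  have hgc' : ContinuousOn g (uIcc a b) := by rwa [uIcc_of_le hab]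
  have hSc' : ContinuousOn (Sfun n) (uIcc a b) := by
    rw [uIcc_of_le hab]
    exact (Sfun_contOn n hn).mono fun x hx => lt_of_lt_of_le ha hx.1
  have hSrep : ∀ x ∈ Icc a b, Sfun n x = Sfun n a + ∫ t in a..x, hfun n t :=
    fun x hx => Sfun_add n hn ha.le hx.1
  have hHii : IntervalIntegrable (hfun n) volume a b := hfun_II' n hn ha.le hab
  set ψ2 : ℝ → ℝ := fun t => deriv g t * Sfun n t + g t * hfun n t with hψ2def
  have hψ2 : IntervalIntegrable ψ2 volume a b :=
    (hDii.mul_continuousOn hSc').add (hHii.continuousOn_mul hgc')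
  have hgS : ∀ x ∈ Icc a b, g x * Sfun n x = g a * Sfun n a + ∫ t in a..x, ψ2 t := by
    intro x hx
    have hax : a ≤ x := hx.1
    have hsub : uIcc a x ⊆ uIcc a b := by
      rw [uIcc_of_le hax, uIcc_of_le hab]; exact Icc_subset_Icc le_rfl hx.2
    have h := parts_ac a x hax g (Sfun n) (deriv g) (hfun n)
      (hDii.mono_set hsub) (hHii.mono_set hsub)
      (fun y hy => hrep y (Icc_subset_Icc le_rfl hx.2 hy))
      (fun y hy => hSrep y (Icc_subset_Icc le_rfl hx.2 hy))
    linarith [h]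
  have main := parts_ac a b hab g (fun x => g x * Sfun n x) (deriv g) ψ2 hDii hψ2 hrep hgS
  have hii1 : IntervalIntegrable (fun x => g x * deriv g x * Sfun n x) volume a b :=
    (hDii.continuousOn_mul hgc').mul_continuousOn hSc'
  have hii2 : IntervalIntegrable (fun x => g x ^ 2 * hfun n x) volume a b :=
    hHii.continuousOn_mul (hgc'.pow 2)
  have hsplit : (∫ x in a..b, (deriv g x * (g x * Sfun n x) + g x * ψ2 x))
      = 2 * (∫ x in a..b, g x * deriv g x * Sfun n x) + ∫ x in a..b, g x ^ 2 * hfun n x := by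
    have heq : ∀ x ∈ uIcc a b, deriv g x * (g x * Sfun n x) + g x * ψ2 x
        = 2 * (g x * deriv g x * Sfun n x) + g x ^ 2 * hfun n x := by
      intro x _; simp only [hψ2def]; ring
    rw [intervalIntegral.integral_congr heq,
      intervalIntegral.integral_add (hii1.const_mul 2) hii2,
      intervalIntegral.integral_const_mul]
  have habs : -(∫ x in a..b, |g x * deriv g x| * Sfun n x)
      ≤ ∫ x in a..b, g x * deriv g x * Sfun n x := by
    have h1 := intervalIntegral.abs_integral_le_integral_abs
      (f := fun x => g x * deriv g x * Sfun n x) (μ := volume) (a := a) (b := b) hab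
    have h2 : (∫ x in a..b, |g x * deriv g x * Sfun n x|)
        = ∫ x in a..b, |g x * deriv g x| * Sfun n x := by
      refine intervalIntegral.integral_congr fun x hx => ?_
      rw [uIcc_of_le hab] at hx
      rw [abs_mul, abs_of_nonneg (Sfun_nonneg n (by linarith [hx.1] : (1:ℝ) ≤ x))]
    rw [h2] at h1
    have := neg_abs_le (∫ x in a..b, g x * deriv g x * Sfun n x)
    linarith
  have hSa : 0 ≤ g a ^ 2 * Sfun n a := mul_nonneg (sq_nonneg _) (Sfun_nonneg n ha.le)
  have e1 : g b * (g b * Sfun n b) = g b ^ 2 * Sfun n b := by ring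
  have e2 : g a * (g a * Sfun n a) = g a ^ 2 * Sfun n a := by ring
  rw [hsplit, e1, e2] at main
  linarith


/-- the radial Heisenberg inequality in the presence of a Schwarzschild black
hole. If `g : (1,∞) → ℝ` is locally absolutely continuous (encoded by the fundamental
theorem of calculus characterization) with `g(r)² rⁿ → 0` as `r → ∞`, then
`(1/2) ∫₁^∞ g² r^(n−1) √(r^(n−2)/(r^(n−2)−1)) dr
  ≤ (∫₁^∞ s² g² r^(n−1) √(r^(n−2)/(r^(n−2)−1)) dr)^(1/2)
    (∫₁^∞ g'² r^(n−1) √((r^(n−2)−1)/r^(n−2)) dr)^(1/2)`. -/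
theorem schwarzschild_heisenberg_radial (n : ℕ) (hn : 3 ≤ n) (g : ℝ → ℝ)
    (hAC : ∀ a b : ℝ, 1 < a → a ≤ b →
      MeasureTheory.IntegrableOn (deriv g) (Set.Icc a b) ∧
      ∀ x ∈ Set.Icc a b, g x = g a + ∫ t in a..x, deriv g t)
    (hlim : Filter.Tendsto (fun r : ℝ => g r ^ 2 * r ^ n) Filter.atTop (nhds 0)) :
    ENNReal.ofReal ((1 : ℝ) / 2) *
        ∫⁻ r in Set.Ioi (1 : ℝ),
          ENNReal.ofReal (g r ^ 2 * r ^ (n - 1)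
            * Real.sqrt (r ^ (n - 2) / (r ^ (n - 2) - 1)))
      ≤ (∫⁻ r in Set.Ioi (1 : ℝ),
            ENNReal.ofReal (schS n r ^ 2 * g r ^ 2 * r ^ (n - 1)
              * Real.sqrt (r ^ (n - 2) / (r ^ (n - 2) - 1)))) ^ ((1 : ℝ) / 2) *
        (∫⁻ r in Set.Ioi (1 : ℝ),
            ENNReal.ofReal (deriv g r ^ 2 * r ^ (n - 1)
              * Real.sqrt ((r ^ (n - 2) - 1) / r ^ (n - 2)))) ^ ((1 : ℝ) / 2) := by
  classical
  -- notations
  set w1 : ℝ → ℝ := fun r => Real.sqrt (r ^ (n - 2) / (r ^ (n - 2) - 1)) with hw1def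
  set w2 : ℝ → ℝ := fun r => Real.sqrt ((r ^ (n - 2) - 1) / r ^ (n - 2)) with hw2def
  set B : ℝ≥0∞ := ∫⁻ r in Set.Ioi (1:ℝ), ENNReal.ofReal (|g r * deriv g r| * Sfun n r) with hBdef
  set I : ℝ≥0∞ := ∫⁻ r in Set.Ioi (1:ℝ), ENNReal.ofReal (g r ^ 2 * r ^ (n-1) * w1 r) with hIdef
  -- basic facts about points in `Ioi 1`
  have hm2 : n - 2 ≠ 0 := by omega
  have hpos : ∀ r : ℝ, 1 < r → (0:ℝ) < r ^ (n-2) - 1 := by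
    intro r hr
    have : (1:ℝ) < r ^ (n-2) := one_lt_pow₀ hr hm2
    linarith
  -- continuity of g on Icc a b for 1 < a
  have hgcIcc : ∀ {a b : ℝ}, 1 < a → a ≤ b → ContinuousOn g (Icc a b) := by
    intro a b ha hab
    obtain ⟨hDint, hrep⟩ := hAC a b ha hab
    have hDii : IntervalIntegrable (deriv g) volume a b :=
      (intervalIntegrable_iff_integrableOn_Icc_of_le hab).mpr hDint
    have h1 : ContinuousOn (fun x => g a + ∫ t in a..x, deriv g t) (Icc a b) := by
      refine continuousOn_const.add ?_
      have := intervalIntegral.continuousOn_primitive_interval'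
        hDii (left_mem_uIcc (a := a) (b := b))
      rwa [uIcc_of_le hab] at this
    exact h1.congr fun x hx => hrep x hx
  have hgco : ContinuousOn g (Ioi 1) := by
    intro r hr
    rw [mem_Ioi] at hr
    apply ContinuousAt.continuousWithinAt
    have ha1 : 1 < (1 + r)/2 := by linarith
    have har : (1 + r)/2 ≤ r + 1 := by linarith
    have hmem : Icc ((1+r)/2) (r+1) ∈ nhds r := Icc_mem_nhds (by linarith) (by linarith)
    exact (hgcIcc ha1 har).continuousAt hmem
  have hw1co : ContinuousOn w1 (Ioi 1) := by
    apply Real.continuous_sqrt.comp_continuousOn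
    exact (continuousOn_pow _).div ((continuousOn_pow _).sub continuousOn_const)
      (fun r hr => (hpos r hr).ne')
  have hw2co : ContinuousOn w2 (Ioi 1) := by
    apply Real.continuous_sqrt.comp_continuousOn
    refine ((continuousOn_pow _).sub continuousOn_const).div (continuousOn_pow _) ?_
    intro r hr
    have : (0:ℝ) < r := lt_trans one_pos hr
    positivity
  have hschS : ∀ r : ℝ, schS n r = Sfun n r / r ^ (n-1) := fun r => rfl
  have hschSco : ContinuousOn (schS n) (Ioi 1) := by
    have : ContinuousOn (fun r => Sfun n r / r ^ (n-1)) (Ioi 1) := by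
      refine (Sfun_contOn n hn).div (continuousOn_pow _) ?_
      intro r hr
      have : (0:ℝ) < r := lt_trans one_pos hr
      positivity
    exact this.congr fun r _ => hschS r
  -- PART II : B ≤ RHS product
  set f1 : ℝ → ℝ := fun r => |g r| * schS n r * Real.sqrt (r ^ (n-1) * w1 r) with hf1def
  set f2 : ℝ → ℝ := fun r => |deriv g r| * Real.sqrt (r ^ (n-1) * w2 r) with hf2def
  have hschSnn : ∀ r : ℝ, 1 < r → 0 ≤ schS n r := by
    intro r hr
    rw [hschS]
    exact div_nonneg (Sfun_nonneg n hr.le) (pow_nonneg (by linarith) _)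
  have hf1nn : ∀ r : ℝ, 1 < r → 0 ≤ f1 r := by
    intro r hr
    exact mul_nonneg (mul_nonneg (abs_nonneg _) (hschSnn r hr)) (Real.sqrt_nonneg _)
  have hf2nn : ∀ r : ℝ, 0 ≤ f2 r := fun r =>
    mul_nonneg (abs_nonneg _) (Real.sqrt_nonneg _)
  have hprod : ∀ r ∈ Ioi (1:ℝ), ENNReal.ofReal (|g r * deriv g r| * Sfun n r)
      = ((fun r => ENNReal.ofReal (f1 r)) * (fun r => ENNReal.ofReal (f2 r))) r := by
    intro r hr
    rw [mem_Ioi] at hr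
    have hr0 : (0:ℝ) < r := lt_trans one_pos hr
    have hA : (0:ℝ) < r ^ (n-2) := pow_pos hr0 _
    have hB := hpos r hr
    have hrn : (0:ℝ) < r ^ (n-1) := pow_pos hr0 _
    have hw12 : w1 r * w2 r = 1 := by
      simp only [hw1def, hw2def]
      rw [← Real.sqrt_mul (div_nonneg hA.le hB.le), div_mul_div_comm,
        mul_comm (r ^ (n-2)), div_self (by positivity), Real.sqrt_one]
    have hsq : Real.sqrt (r ^ (n-1) * w1 r) * Real.sqrt (r ^ (n-1) * w2 r) = r ^ (n-1) := by
      rw [← Real.sqrt_mul (mul_nonneg hrn.le (Real.sqrt_nonneg _))]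
      have e : r ^ (n-1) * w1 r * (r ^ (n-1) * w2 r) = (r ^ (n-1)) * (r ^ (n-1)) := by
        calc r ^ (n-1) * w1 r * (r ^ (n-1) * w2 r)
            = (r ^ (n-1) * r ^ (n-1)) * (w1 r * w2 r) := by ring
          _ = r ^ (n-1) * r ^ (n-1) := by rw [hw12, mul_one]
      rw [e, Real.sqrt_mul_self hrn.le]
    have hval : f1 r * f2 r = |g r * deriv g r| * Sfun n r := by
      simp only [hf1def, hf2def]
      rw [abs_mul]
      calc |g r| * schS n r * Real.sqrt (r ^ (n-1) * w1 r)
            * (|deriv g r| * Real.sqrt (r ^ (n-1) * w2 r))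
          = |g r| * |deriv g r|
            * (schS n r * (Real.sqrt (r ^ (n-1) * w1 r) * Real.sqrt (r ^ (n-1) * w2 r))) := by
            ring
        _ = |g r| * |deriv g r| * (schS n r * r ^ (n-1)) := by rw [hsq]
        _ = |g r| * |deriv g r| * Sfun n r := by
            rw [hschS, div_mul_cancel₀ _ hrn.ne']
    show ENNReal.ofReal (|g r * deriv g r| * Sfun n r)
        = ENNReal.ofReal (f1 r) * ENNReal.ofReal (f2 r)
    rw [← ENNReal.ofReal_mul (hf1nn r hr), hval]
  have hF1aem : AEMeasurable (fun r => ENNReal.ofReal (f1 r)) (volume.restrict (Ioi 1)) := by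
    apply ENNReal.measurable_ofReal.comp_aemeasurable
    have hc : ContinuousOn f1 (Ioi 1) :=
      ((continuous_abs.comp_continuousOn hgco).mul hschSco).mul
        (Real.continuous_sqrt.comp_continuousOn ((continuousOn_pow _).mul hw1co))
    exact hc.aemeasurable measurableSet_Ioi
  have hF2aem : AEMeasurable (fun r => ENNReal.ofReal (f2 r)) (volume.restrict (Ioi 1)) := by
    apply ENNReal.measurable_ofReal.comp_aemeasurable
    refine AEMeasurable.mul ((measurable_deriv g).abs).aemeasurable ?_
    exact (Real.continuous_sqrt.comp_continuousOn
      ((continuousOn_pow _).mul hw2co)).aemeasurable measurableSet_Ioi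
  have hpq : Real.HolderConjugate 2 2 := Real.HolderConjugate.two_two
  have hHold := ENNReal.lintegral_mul_le_Lp_mul_Lq (volume.restrict (Ioi 1)) hpq hF1aem hF2aem
  have hfac1 : (∫⁻ r in Ioi (1:ℝ), (fun r => ENNReal.ofReal (f1 r)) r ^ (2:ℝ))
      = ∫⁻ r in Ioi (1:ℝ), ENNReal.ofReal (schS n r ^ 2 * g r ^ 2 * r ^ (n-1) * w1 r) := by
    refine setLIntegral_congr_fun measurableSet_Ioi (fun r hr => ?_)
    rw [mem_Ioi] at hr
    have hr0 : (0:ℝ) < r := lt_trans one_pos hr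
    have harg : (0:ℝ) ≤ r ^ (n-1) * w1 r :=
      mul_nonneg (pow_nonneg hr0.le _) (Real.sqrt_nonneg _)
    rw [ENNReal.ofReal_rpow_of_nonneg (hf1nn r hr) (by norm_num)]
    congr 1
    rw [show (2:ℝ) = ((2:ℕ):ℝ) by norm_num, Real.rpow_natCast]
    simp only [hf1def]
    rw [mul_pow, mul_pow, sq_abs, Real.sq_sqrt harg]
    ring
  have hfac2 : (∫⁻ r in Ioi (1:ℝ), (fun r => ENNReal.ofReal (f2 r)) r ^ (2:ℝ))
      = ∫⁻ r in Ioi (1:ℝ), ENNReal.ofReal (deriv g r ^ 2 * r ^ (n-1) * w2 r) := by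
    refine setLIntegral_congr_fun measurableSet_Ioi (fun r hr => ?_)
    rw [mem_Ioi] at hr
    have hr0 : (0:ℝ) < r := lt_trans one_pos hr
    have harg : (0:ℝ) ≤ r ^ (n-1) * w2 r :=
      mul_nonneg (pow_nonneg hr0.le _) (Real.sqrt_nonneg _)
    rw [ENNReal.ofReal_rpow_of_nonneg (hf2nn r) (by norm_num)]
    congr 1
    rw [show (2:ℝ) = ((2:ℕ):ℝ) by norm_num, Real.rpow_natCast]
    simp only [hf2def]
    rw [mul_pow, sq_abs, Real.sq_sqrt harg]
    ring
  have hPartII : B ≤ (∫⁻ r in Ioi (1:ℝ),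
        ENNReal.ofReal (schS n r ^ 2 * g r ^ 2 * r ^ (n-1) * w1 r)) ^ ((1:ℝ)/2) *
      (∫⁻ r in Ioi (1:ℝ), ENNReal.ofReal (deriv g r ^ 2 * r ^ (n-1) * w2 r)) ^ ((1:ℝ)/2) := by
    rw [hBdef, setLIntegral_congr_fun measurableSet_Ioi hprod,
      ← hfac1, ← hfac2]
    exact hHold
  -- PART I : I ≤ 2 * B
  have hTII : ∀ {a b : ℝ}, 1 < a → a ≤ b →
      IntervalIntegrable (fun x => g x * deriv g x * Sfun n x) volume a b := by
    intro a b ha hab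
    have hDii : IntervalIntegrable (deriv g) volume a b :=
      (intervalIntegrable_iff_integrableOn_Icc_of_le hab).mpr (hAC a b ha hab).1
    have hgc' : ContinuousOn g (uIcc a b) := by rw [uIcc_of_le hab]; exact hgcIcc ha hab
    have hSc' : ContinuousOn (Sfun n) (uIcc a b) := by
      rw [uIcc_of_le hab]
      exact (Sfun_contOn n hn).mono fun x hx => lt_of_lt_of_le ha hx.1
    exact (hDii.continuousOn_mul hgc').mul_continuousOn hSc'
  have hg2hII : ∀ {a b : ℝ}, 1 < a → a ≤ b →
      IntervalIntegrable (fun x => g x ^ 2 * hfun n x) volume a b := by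
    intro a b ha hab
    have hgc' : ContinuousOn g (uIcc a b) := by rw [uIcc_of_le hab]; exact hgcIcc ha hab
    exact (hfun_II' n hn ha.le hab).continuousOn_mul (hgc'.pow 2)
  set aseq : ℕ → ℝ := fun k => 1 + 1/((k:ℝ)+1) with haseq
  set bseq : ℕ → ℝ := fun k => (k:ℝ) + 2 with hbseq
  have haseq1 : ∀ k, 1 < aseq k := by
    intro k
    have : (0:ℝ) < 1/((k:ℝ)+1) := by positivity
    simp only [haseq]
    linarith
  have haseq2 : ∀ k, aseq k ≤ 2 := by
    intro k
    have h0 : (0:ℝ) ≤ (k:ℝ) := Nat.cast_nonneg k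
    have : 1/((k:ℝ)+1) ≤ 1 := by rw [div_le_one (by positivity)]; linarith
    simp only [haseq]
    linarith
  have hbseq2 : ∀ k, 2 ≤ bseq k := by
    intro k
    have h0 : (0:ℝ) ≤ (k:ℝ) := Nat.cast_nonneg k
    simp only [hbseq]
    linarith
  have hab_seq : ∀ k, aseq k ≤ bseq k := fun k => (haseq2 k).trans (hbseq2 k)
  have haseq_anti : Antitone aseq := by
    intro k l hkl
    simp only [haseq]
    have h1 : (0:ℝ) < (k:ℝ) + 1 := by positivity
    have h2 : (k:ℝ) + 1 ≤ (l:ℝ) + 1 := by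
      have := Nat.cast_le (α := ℝ).mpr hkl
      linarith
    have := one_div_le_one_div_of_le h1 h2
    linarith
  have hbseq_mono : Monotone bseq := by
    intro k l hkl
    simp only [hbseq]
    have := Nat.cast_le (α := ℝ).mpr hkl
    linarith
  set F : ℝ → ℝ≥0∞ := fun r => ENNReal.ofReal (g r ^ 2 * r ^ (n-1) * w1 r) with hFdef
  have hFaem : AEMeasurable F (volume.restrict (Ioi 1)) := by
    apply ENNReal.measurable_ofReal.comp_aemeasurable
    exact (((hgco.pow 2).mul (continuousOn_pow _)).mul hw1co).aemeasurable measurableSet_Ioi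
  set fk : ℕ → ℝ → ℝ≥0∞ := fun k => (Icc (aseq k) (bseq k)).indicator F with hfkdef
  have hsubk : ∀ k, Icc (aseq k) (bseq k) ⊆ Ioi 1 :=
    fun k x hx => lt_of_lt_of_le (haseq1 k) hx.1
  have hfk_aem : ∀ k, AEMeasurable (fk k) (volume.restrict (Ioi 1)) := by
    intro k
    refine (aemeasurable_indicator_iff measurableSet_Icc).mpr ?_
    exact hFaem.mono_measure Measure.restrict_le_self
  have hfk_mono : Monotone fk := by
    intro k l hkl
    exact indicator_le_indicator_of_subset
      (Icc_subset_Icc (haseq_anti hkl) (hbseq_mono hkl)) (fun r => zero_le)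
  have hsup : ∀ r ∈ Ioi (1:ℝ), (⨆ k, fk k r) = F r := by
    intro r hr
    rw [mem_Ioi] at hr
    obtain ⟨k1, hk1⟩ := exists_nat_one_div_lt (show (0:ℝ) < r - 1 by linarith)
    obtain ⟨k2, hk2⟩ := exists_nat_ge r
    refine le_antisymm (iSup_le fun k => ?_) (le_iSup_of_le (max k1 k2) ?_)
    · exact Set.indicator_le_self _ _ r
    · have hcast1 : (k1:ℝ) + 1 ≤ ((max k1 k2 : ℕ):ℝ) + 1 := by
        have := Nat.cast_le (α := ℝ).mpr (le_max_left k1 k2)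
        linarith
      have hcast2 : (k2:ℝ) ≤ ((max k1 k2 : ℕ):ℝ) := Nat.cast_le.mpr (le_max_right k1 k2)
      have hK : r ∈ Icc (aseq (max k1 k2)) (bseq (max k1 k2)) := by
        constructor
        · have h1 : 1/(((max k1 k2 : ℕ):ℝ)+1) ≤ 1/((k1:ℝ)+1) :=
            one_div_le_one_div_of_le (by positivity) hcast1
          simp only [haseq]
          linarith
        · simp only [hbseq]
          linarith
      simp only [hfkdef]
      rw [Set.indicator_of_mem hK]
  have hIsup : I = ⨆ k, ∫⁻ r in Ioi (1:ℝ), fk k r := by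
    rw [hIdef, ← lintegral_iSup' hfk_aem (ae_of_all _ fun r k l hkl => hfk_mono hkl r)]
    exact setLIntegral_congr_fun measurableSet_Ioi (fun r hr => (hsup r hr).symm)
  have hJk : ∀ k, (∫⁻ r in Ioi (1:ℝ), fk k r) = ∫⁻ r in Icc (aseq k) (bseq k), F r := by
    intro k
    simp only [hfkdef]
    rw [lintegral_indicator measurableSet_Icc, Measure.restrict_restrict measurableSet_Icc,
      inter_eq_self_of_subset_left (hsubk k)]
  have hbound : ∀ k, (∫⁻ r in Ioi (1:ℝ), fk k r)
      ≤ ENNReal.ofReal (g (bseq k) ^ 2 * Sfun n (bseq k)) + 2 * B := by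
    intro k
    have ha : 1 < aseq k := haseq1 k
    have hab : aseq k ≤ bseq k := hab_seq k
    rw [hJk k, ← setLIntegral_congr (Ioc_ae_eq_Icc (a := aseq k) (b := bseq k))]
    have hInteg : IntegrableOn (fun x => g x ^ 2 * hfun n x) (Ioc (aseq k) (bseq k)) :=
      (hg2hII ha hab).1
    have hnn : 0 ≤ᵐ[volume.restrict (Ioc (aseq k) (bseq k))] fun x => g x ^ 2 * hfun n x := by
      filter_upwards [ae_restrict_mem measurableSet_Ioc] with x hx
      exact mul_nonneg (sq_nonneg _) (hfun_nonneg n (by linarith [hx.1]))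
    have h2 : (∫⁻ r in Ioc (aseq k) (bseq k), F r)
        = ENNReal.ofReal (∫ x in Ioc (aseq k) (bseq k), g x ^ 2 * hfun n x) := by
      rw [ofReal_integral_eq_lintegral_ofReal hInteg hnn]
      refine setLIntegral_congr_fun measurableSet_Ioc (fun r hr => ?_)
      simp only [hFdef, hw1def]
      congr 1
      unfold hfun
      ring
    rw [h2, ← intervalIntegral.integral_of_le hab]
    have h4 := key_ineq n hn g hAC ha hab
    have hT := hTII ha hab
    have hTabs : IntegrableOn (fun x => |g x * deriv g x| * Sfun n x) (Ioc (aseq k) (bseq k)) := by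
      refine (hT.abs.1).congr ?_
      filter_upwards [ae_restrict_mem measurableSet_Ioc] with x hx
      rw [abs_mul, abs_of_nonneg (Sfun_nonneg n (le_of_lt (lt_of_lt_of_le ha hx.1.le)))]
    have hnn2 : 0 ≤ᵐ[volume.restrict (Ioc (aseq k) (bseq k))]
        fun x => |g x * deriv g x| * Sfun n x := by
      filter_upwards [ae_restrict_mem measurableSet_Ioc] with x hx
      exact mul_nonneg (abs_nonneg _) (Sfun_nonneg n (le_of_lt (lt_of_lt_of_le ha hx.1.le)))
    have h5 : ENNReal.ofReal (∫ x in (aseq k)..(bseq k), |g x * deriv g x| * Sfun n x) ≤ B := by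
      rw [intervalIntegral.integral_of_le hab,
        ofReal_integral_eq_lintegral_ofReal hTabs hnn2, hBdef]
      exact lintegral_mono_set fun x hx => lt_of_lt_of_le ha hx.1.le
    calc ENNReal.ofReal (∫ x in (aseq k)..(bseq k), g x ^ 2 * hfun n x)
        ≤ ENNReal.ofReal (g (bseq k) ^ 2 * Sfun n (bseq k)
            + 2 * ∫ x in (aseq k)..(bseq k), |g x * deriv g x| * Sfun n x) :=
          ENNReal.ofReal_le_ofReal h4
      _ ≤ ENNReal.ofReal (g (bseq k) ^ 2 * Sfun n (bseq k))
            + ENNReal.ofReal (2 * ∫ x in (aseq k)..(bseq k), |g x * deriv g x| * Sfun n x) :=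
          ENNReal.ofReal_add_le
      _ ≤ ENNReal.ofReal (g (bseq k) ^ 2 * Sfun n (bseq k)) + 2 * B := by
          refine add_le_add le_rfl ?_
          rw [ENNReal.ofReal_mul (by norm_num : (0:ℝ) ≤ 2)]
          have h2e : ENNReal.ofReal (2:ℝ) = 2 := by norm_num
          rw [h2e]
          gcongr
  have hJtend : Tendsto (fun k => ∫⁻ r in Ioi (1:ℝ), fk k r) atTop (nhds I) := by
    rw [hIsup]
    exact tendsto_atTop_iSup fun k l hkl => lintegral_mono fun r => hfk_mono hkl r
  have hgS0 : Tendsto (fun r : ℝ => g r ^ 2 * Sfun n r) atTop (nhds 0) := by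
    have hub : ∀ᶠ r in atTop, g r ^ 2 * Sfun n r
        ≤ (Sfun n 2 + Real.sqrt 2) * (g r ^ 2 * r ^ n) := by
      filter_upwards [eventually_ge_atTop (2:ℝ)] with r hr
      calc g r ^ 2 * Sfun n r ≤ g r ^ 2 * ((Sfun n 2 + Real.sqrt 2) * r ^ n) :=
            mul_le_mul_of_nonneg_left (Sfun_growth n hn hr) (sq_nonneg _)
        _ = (Sfun n 2 + Real.sqrt 2) * (g r ^ 2 * r ^ n) := by ring
    have hlb : ∀ᶠ r in atTop, 0 ≤ g r ^ 2 * Sfun n r := by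
      filter_upwards [eventually_ge_atTop (1:ℝ)] with r hr
      exact mul_nonneg (sq_nonneg _) (Sfun_nonneg n hr)
    have hC : Tendsto (fun r : ℝ => (Sfun n 2 + Real.sqrt 2) * (g r ^ 2 * r ^ n))
        atTop (nhds 0) := by
      have := hlim.const_mul (Sfun n 2 + Real.sqrt 2)
      rwa [mul_zero] at this
    exact tendsto_of_tendsto_of_tendsto_of_le_of_le' tendsto_const_nhds hC hlb hub
  have hbk_tend : Tendsto bseq atTop atTop :=
    tendsto_atTop_add_const_right atTop 2 tendsto_natCast_atTop_atTop
  have hRtend : Tendsto (fun k => ENNReal.ofReal (g (bseq k) ^ 2 * Sfun n (bseq k)) + 2 * B)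
      atTop (nhds (2 * B)) := by
    have h0 : Tendsto (fun k => g (bseq k) ^ 2 * Sfun n (bseq k)) atTop (nhds 0) :=
      hgS0.comp hbk_tend
    have h1 := (ENNReal.tendsto_ofReal h0).add (tendsto_const_nhds (x := 2 * B) (f := atTop))
    rwa [ENNReal.ofReal_zero, zero_add] at h1
  have hPartI : I ≤ 2 * B := le_of_tendsto_of_tendsto' hJtend hRtend hbound
  -- combine
  have hhalf : ENNReal.ofReal ((1:ℝ)/2) * 2 = 1 := by
    have h2 : (2:ℝ≥0∞) = ENNReal.ofReal (2:ℝ) := by norm_num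
    rw [h2, ← ENNReal.ofReal_mul (by norm_num)]
    norm_num
  calc ENNReal.ofReal ((1:ℝ)/2) * I ≤ ENNReal.ofReal ((1:ℝ)/2) * (2 * B) :=
        by gcongr
    _ = B := by rw [← mul_assoc, hhalf, one_mul]
    _ ≤ _ := hPartII
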